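/- Let p ≥ 1, let N* be the real vector space of p×p complex skew-Hermitian matrices with Lebesgue (additive Haar) measure μ, and let s be an invertible p×p complex matrix. Then the real-linear map m ↦ sᴴ m s of N* to itself satisfies μ(image of A) = |det s|^{2p} · μ(A) for every measurable set A; in particular, for s lower triangular with positive real diagonal entries s₁₁,…,s_pp, the scaling factor is θ(s)^{2p} with θ(s) = s₁₁·…·s_pp. -/

import Mathlib

open MeasureTheory Matrix Set
open scoped ENNReal

noncomputable section

instance (p : ℕ) : MeasurableSpace (Matrix (Fin p) (Fin p) ℂ) :=
  inferInstanceAs (MeasurableSpace ((Fin p) → (Fin p) → ℂ))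

instance (p : ℕ) : BorelSpace (Matrix (Fin p) (Fin p) ℂ) :=
  inferInstanceAs (BorelSpace ((Fin p) → (Fin p) → ℂ))

/-- `N*`, the real vector space of `p×p` complex skew-Hermitian matrices (`mᴴ = -m`),
of real dimension `p²`. -/
abbrev SkewHerm (p : ℕ) : Type := skewAdjoint (Matrix (Fin p) (Fin p) ℂ)

/-- The Euclidean (Frobenius) norm `‖m‖ = (Tr (m mᴴ))^{1/2}` on matrices. -/
def matNorm {p : ℕ} (m : Matrix (Fin p) (Fin p) ℂ) : ℝ :=
  Real.sqrt ((m * mᴴ).trace.re)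

/-- The function `f₀(m) = e^{-‖m‖} / ‖m‖^{p²/2}` on `N*`. -/
def f₀ (p : ℕ) (m : SkewHerm p) : ℝ :=
  Real.exp (-matNorm (m : Matrix (Fin p) (Fin p) ℂ)) /
    matNorm (m : Matrix (Fin p) (Fin p) ℂ) ^ ((p ^ 2 : ℝ) / 2)

/-- The action `m ↦ sᴴ m s` of a matrix `s` on the space `N*` of skew-Hermitian matrices. -/
def conjAct {p : ℕ} (s : Matrix (Fin p) (Fin p) ℂ) (m : SkewHerm p) : SkewHerm p :=
  ⟨sᴴ * (m : Matrix (Fin p) (Fin p) ℂ) * s, by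
    have hm : (m : Matrix (Fin p) (Fin p) ℂ)ᴴ = -(m : Matrix (Fin p) (Fin p) ℂ) := m.2
    simp [skewAdjoint.mem_iff, Matrix.star_eq_conjTranspose, Matrix.conjTranspose_mul,
      Matrix.mul_assoc, hm]⟩

/-- The operator `T_a(s) f (m) = (‖sᴴ m s‖/‖m‖)^{p²/2} · f(sᴴ m s)` associated with the
multiplicative cocycle `a(m) = ‖m‖^{p²/2}`. -/
def Ta (p : ℕ) (s : Matrix (Fin p) (Fin p) ℂ) (f : SkewHerm p → ℂ) : SkewHerm p → ℂ :=
  fun m =>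
    (((matNorm (sᴴ * (m : Matrix (Fin p) (Fin p) ℂ) * s) /
        matNorm (m : Matrix (Fin p) (Fin p) ℂ)) ^ ((p ^ 2 : ℝ) / 2) : ℝ) : ℂ) *
      f (conjAct s m)


open scoped TensorProduct Kronecker

namespace HaarScalingAux

/-! ### Instances on matrix space and on `SkewHerm p` -/

instance (p : ℕ) : NormedAddCommGroup (Matrix (Fin p) (Fin p) ℂ) :=
  inferInstanceAs (NormedAddCommGroup ((Fin p) → (Fin p) → ℂ))

instance (p : ℕ) : NormedSpace ℝ (Matrix (Fin p) (Fin p) ℂ) :=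
  inferInstanceAs (NormedSpace ℝ ((Fin p) → (Fin p) → ℂ))

instance (p : ℕ) : NormedSpace ℝ (SkewHerm p) where
  norm_smul_le r x := by
    show ‖(↑(r • x) : Matrix (Fin p) (Fin p) ℂ)‖ ≤ _
    rw [skewAdjoint.val_smul]
    exact norm_smul_le r (x : Matrix (Fin p) (Fin p) ℂ)

/-- The inclusion of `SkewHerm p` into matrices, as a real-linear map. -/
def inclL (p : ℕ) : SkewHerm p →ₗ[ℝ] Matrix (Fin p) (Fin p) ℂ where
  toFun := Subtype.val
  map_add' _ _ := rfl
  map_smul' _ _ := rfl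

instance (p : ℕ) : FiniteDimensional ℝ (SkewHerm p) :=
  FiniteDimensional.of_injective (inclL p) Subtype.val_injective

instance (p : ℕ) : BorelSpace (SkewHerm p) := Subtype.borelSpace _

/-! ### Real determinant of a complex-linear endomorphism -/

/-- Coordinatewise complex conjugation, as a real-linear map. -/
def Cj (ι : Type*) : (ι → ℂ) →ₗ[ℝ] (ι → ℂ) where
  toFun v i := starRingEnd ℂ (v i)
  map_add' v w := by funext i; simp
  map_smul' r v := by funext i; simp [Complex.real_smul]

@[simp] lemma Cj_apply {ι : Type*} (v : ι → ℂ) (i : ι) : Cj ι v i = starRingEnd ℂ (v i) := rfl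

/-- `v ↦ (v, conj v)` bundled, real-linear. -/
def CPair (ι : Type*) : (ι → ℂ) →ₗ[ℝ] ((ι → ℂ) × (ι → ℂ)) :=
  (LinearMap.id (R := ℝ) (M := ι → ℂ)).prod (Cj ι)

/-- The complex-linear map `ℂ ⊗[ℝ] (ι → ℂ) →ₗ[ℂ] (ι → ℂ) × (ι → ℂ)`,
`z ⊗ v ↦ (z • v, z • conj v)`. -/
def Phi (ι : Type*) : (ℂ ⊗[ℝ] (ι → ℂ)) →ₗ[ℂ] ((ι → ℂ) × (ι → ℂ)) :=
  TensorProduct.AlgebraTensorModule.lift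
    (LinearMap.toSpanSingleton ℂ ((ι → ℂ) →ₗ[ℝ] ((ι → ℂ) × (ι → ℂ))) (CPair ι))

@[simp] lemma Phi_tmul {ι : Type*} (z : ℂ) (v : ι → ℂ) :
    Phi ι (z ⊗ₜ[ℝ] v) = (z • v, z • Cj ι v) := by
  simp [Phi, CPair, LinearMap.toSpanSingleton, LinearMap.smulRight]

lemma Phi_surjective (ι : Type*) : Function.Surjective (Phi ι) := by
  rintro ⟨v, w⟩
  refine ⟨(1 : ℂ) ⊗ₜ[ℝ] ((1/2 : ℝ) • (v + Cj ι w))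
      + Complex.I ⊗ₜ[ℝ] ((-(1/2) : ℝ) • (Complex.I • (v - Cj ι w))), ?_⟩
  rw [map_add, Phi_tmul, Phi_tmul]
  ext i <;>
  · simp [Complex.real_smul, _root_.map_smul]
    ring_nf
    simp [Complex.I_sq]
    ring

lemma Phi_bijective (ι : Type*) [Fintype ι] : Function.Bijective (Phi ι) := by
  have hrank : Module.finrank ℂ (ℂ ⊗[ℝ] (ι → ℂ)) = Module.finrank ℂ ((ι → ℂ) × (ι → ℂ)) := by
    rw [Module.finrank_baseChange]
    simp [Module.finrank_prod, Module.finrank_pi_fintype, Complex.finrank_real_complex]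
    ring
  exact ⟨(LinearMap.injective_iff_surjective_of_finrank_eq_finrank hrank).2 (Phi_surjective ι),
    Phi_surjective ι⟩

lemma det_prodMap {K V W : Type*} [Field K] [AddCommGroup V] [Module K V]
    [AddCommGroup W] [Module K W] [FiniteDimensional K V] [FiniteDimensional K W]
    (f : V →ₗ[K] V) (g : W →ₗ[K] W) :
    LinearMap.det (f.prodMap g) = LinearMap.det f * LinearMap.det g := by
  classical
  let bV := Module.finBasis K V
  let bW := Module.finBasis K W
  rw [← LinearMap.det_toMatrix (bV.prod bW), LinearMap.toMatrix_prodMap,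
    Matrix.det_fromBlocks_zero₂₁, LinearMap.det_toMatrix, LinearMap.det_toMatrix]

lemma detRS {ι : Type*} [Fintype ι] [DecidableEq ι] (M : Matrix ι ι ℂ) :
    LinearMap.det ((Matrix.toLin' M).restrictScalars ℝ) = Complex.normSq M.det := by
  set g := (Matrix.toLin' M).restrictScalars ℝ with hg
  let e := LinearEquiv.ofBijective (Phi ι) (Phi_bijective ι)
  have hcomm : ((Matrix.toLin' M).prodMap (Matrix.toLin' (M.map (starRingEnd ℂ)))) ∘ₗ (Phi ι)
      = (Phi ι) ∘ₗ (g.baseChange ℂ) := by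
    apply LinearMap.ext
    intro x
    induction x using TensorProduct.induction_on with
    | zero => simp
    | add x y hx hy => simp [map_add, hx, hy]
    | tmul z v =>
      have hmv : (M.map (starRingEnd ℂ)).mulVec (Cj ι v) = Cj ι (M.mulVec v) := by
        funext i
        simp [Matrix.mulVec, dotProduct, map_sum]
      simp [g, LinearMap.baseChange_tmul, Matrix.toLin'_apply, _root_.map_smul, hmv]
  have hconj : (e : (ℂ ⊗[ℝ] (ι → ℂ)) →ₗ[ℂ] ((ι → ℂ) × (ι → ℂ))) ∘ₗ (g.baseChange ℂ)
        ∘ₗ (e.symm : ((ι → ℂ) × (ι → ℂ)) →ₗ[ℂ] (ℂ ⊗[ℝ] (ι → ℂ)))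
      = (Matrix.toLin' M).prodMap (Matrix.toLin' (M.map (starRingEnd ℂ))) := by
    apply LinearMap.ext
    intro x
    have := LinearMap.congr_fun hcomm (e.symm x)
    simpa [e] using this.symm
  have hdet := LinearMap.det_conj (g.baseChange ℂ) e
  rw [hconj, det_prodMap, LinearMap.det_toLin', LinearMap.det_toLin',
    LinearMap.det_baseChange] at hdet
  have hmap : (M.map (starRingEnd ℂ)).det = starRingEnd ℂ M.det := ((starRingEnd ℂ).map_det M).symm
  rw [hmap] at hdet
  have : ((LinearMap.det g : ℝ) : ℂ) = ((Complex.normSq M.det : ℝ) : ℂ) := by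
    rw [show ((LinearMap.det g : ℝ) : ℂ) = algebraMap ℝ ℂ (LinearMap.det g) from rfl, ← hdet,
      Complex.mul_conj]
  exact_mod_cast this

lemma detRS' {V : Type*} [AddCommGroup V] [Module ℂ V] [Module ℝ V] [IsScalarTower ℝ ℂ V]
    {ι : Type*} [Fintype ι] [DecidableEq ι] (e : V ≃ₗ[ℂ] (ι → ℂ)) (f : V →ₗ[ℂ] V) :
    LinearMap.det (f.restrictScalars ℝ) = Complex.normSq (LinearMap.det f) := by
  let er := e.restrictScalars ℝ
  let f' := (e : V →ₗ[ℂ] (ι → ℂ)) ∘ₗ f ∘ₗ (e.symm : (ι → ℂ) →ₗ[ℂ] V)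
  have h1 : LinearMap.det f' = LinearMap.det f := LinearMap.det_conj f e
  have h2 : (er : V →ₗ[ℝ] (ι → ℂ)) ∘ₗ (f.restrictScalars ℝ) ∘ₗ (er.symm : (ι → ℂ) →ₗ[ℝ] V)
      = f'.restrictScalars ℝ := rfl
  have h4 : LinearMap.det (f.restrictScalars ℝ) = LinearMap.det (f'.restrictScalars ℝ) := by
    rw [← h2, LinearMap.det_conj]
  rw [h4, show f' = Matrix.toLin' (LinearMap.toMatrix' f') from (Matrix.toLin'_toMatrix' f').symm]
  rw [detRS, LinearMap.det_toMatrix', h1]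

/-! ### The complex-linear map `m ↦ sᴴ m s` on matrix space and its determinant -/

variable {p : ℕ}

/-- `m ↦ sᴴ m s` as a complex-linear endomorphism of matrix space. -/
def TcL (s : Matrix (Fin p) (Fin p) ℂ) :
    Matrix (Fin p) (Fin p) ℂ →ₗ[ℂ] Matrix (Fin p) (Fin p) ℂ where
  toFun m := sᴴ * m * s
  map_add' m n := by simp [Matrix.mul_add, Matrix.add_mul]
  map_smul' z m := by simp [Matrix.mul_smul, Matrix.smul_mul]

lemma stdBasis_repr (m : Matrix (Fin p) (Fin p) ℂ) (ik : Fin p × Fin p) :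
    (Matrix.stdBasis ℂ (Fin p) (Fin p)).repr m ik = m ik.1 ik.2 := by
  simp [Matrix.stdBasis, Module.Basis.map_repr, Pi.basis_repr]

lemma toMatrix_TcL (s : Matrix (Fin p) (Fin p) ℂ) :
    LinearMap.toMatrix (Matrix.stdBasis ℂ (Fin p) (Fin p)) (Matrix.stdBasis ℂ (Fin p) (Fin p))
      (TcL s) = sᴴ ⊗ₖ sᵀ := by
  ext ⟨i, k⟩ ⟨j, l⟩
  rw [LinearMap.toMatrix_apply, stdBasis_repr]
  simp [TcL, Matrix.stdBasis_eq_single, Matrix.mul_apply, Matrix.single,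
    Finset.sum_ite_eq, ite_and, kroneckerMap_apply]

lemma det_TcL (s : Matrix (Fin p) (Fin p) ℂ) :
    LinearMap.det (TcL s) = (starRingEnd ℂ s.det) ^ p * s.det ^ p := by
  rw [← LinearMap.det_toMatrix (Matrix.stdBasis ℂ (Fin p) (Fin p)), toMatrix_TcL,
    Matrix.det_kronecker, Matrix.det_conjTranspose, Matrix.det_transpose]
  simp [Fintype.card_fin]

/-! ### The decomposition of matrix space into two copies of `SkewHerm p` -/

lemma mem1 (m : Matrix (Fin p) (Fin p) ℂ) :
    ((1/2 : ℝ) • (m - mᴴ)) ∈ skewAdjoint (Matrix (Fin p) (Fin p) ℂ) := by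
  rw [skewAdjoint.mem_iff, Matrix.star_eq_conjTranspose, Matrix.conjTranspose_smul,
    Matrix.conjTranspose_sub, Matrix.conjTranspose_conjTranspose]
  rw [star_trivial]
  module

lemma mem2 (m : Matrix (Fin p) (Fin p) ℂ) :
    ((1/2 : ℝ) • (Complex.I • (m + mᴴ))) ∈ skewAdjoint (Matrix (Fin p) (Fin p) ℂ) := by
  rw [skewAdjoint.mem_iff, Matrix.star_eq_conjTranspose, Matrix.conjTranspose_smul,
    Matrix.conjTranspose_smul, Matrix.conjTranspose_add, Matrix.conjTranspose_conjTranspose]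
  rw [star_trivial, Complex.star_def, Complex.conj_I]
  module

/-- `conjAct s` as a real-linear endomorphism of `SkewHerm p`. -/
def Lmap (s : Matrix (Fin p) (Fin p) ℂ) : SkewHerm p →ₗ[ℝ] SkewHerm p where
  toFun := conjAct s
  map_add' x y := Subtype.ext <| by
    show sᴴ * ((x : Matrix (Fin p) (Fin p) ℂ) + (y : Matrix (Fin p) (Fin p) ℂ)) * s = sᴴ * (x : Matrix (Fin p) (Fin p) ℂ) * s + sᴴ * (y : Matrix (Fin p) (Fin p) ℂ) * s
    rw [Matrix.mul_add, Matrix.add_mul]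
  map_smul' r x := Subtype.ext <| by
    show sᴴ * (r • (x : Matrix (Fin p) (Fin p) ℂ)) * s = r • (sᴴ * (x : Matrix (Fin p) (Fin p) ℂ) * s)
    rw [Matrix.mul_smul, Matrix.smul_mul]

def fwd (p : ℕ) : Matrix (Fin p) (Fin p) ℂ →ₗ[ℝ] SkewHerm p × SkewHerm p where
  toFun m := (⟨_, mem1 m⟩, ⟨_, mem2 m⟩)
  map_add' m n := by
    refine Prod.ext (Subtype.ext ?_) (Subtype.ext ?_) <;>
    · show (1/2 : ℝ) • _ = (1/2 : ℝ) • _ + (1/2 : ℝ) • _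
      rw [Matrix.conjTranspose_add]
      module
  map_smul' r m := by
    refine Prod.ext (Subtype.ext ?_) (Subtype.ext ?_) <;>
    · show (1/2 : ℝ) • _ = r • ((1/2 : ℝ) • _)
      rw [Matrix.conjTranspose_smul, star_trivial]
      module

def bwd (p : ℕ) : SkewHerm p × SkewHerm p →ₗ[ℝ] Matrix (Fin p) (Fin p) ℂ where
  toFun x := (x.1 : Matrix (Fin p) (Fin p) ℂ) - Complex.I • (x.2 : Matrix (Fin p) (Fin p) ℂ)
  map_add' x y := by
    show ((x.1 + y.1 : SkewHerm p) : Matrix (Fin p) (Fin p) ℂ)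
        - Complex.I • ((x.2 + y.2 : SkewHerm p) : Matrix (Fin p) (Fin p) ℂ) = _
    rw [AddSubgroup.coe_add, AddSubgroup.coe_add]
    module
  map_smul' r x := by
    show ((r • x.1 : SkewHerm p) : Matrix (Fin p) (Fin p) ℂ)
        - Complex.I • ((r • x.2 : SkewHerm p) : Matrix (Fin p) (Fin p) ℂ) = _
    rw [skewAdjoint.val_smul, skewAdjoint.val_smul]
    show _ = r • ((x.1 : Matrix (Fin p) (Fin p) ℂ) - Complex.I • (x.2 : Matrix (Fin p) (Fin p) ℂ))
    module

def e2 (p : ℕ) : Matrix (Fin p) (Fin p) ℂ ≃ₗ[ℝ] SkewHerm p × SkewHerm p := by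
  refine LinearEquiv.ofLinear (fwd p) (bwd p) ?_ ?_
  · apply LinearMap.ext
    rintro ⟨x, y⟩
    have hx : (x : Matrix (Fin p) (Fin p) ℂ)ᴴ = -(x : Matrix (Fin p) (Fin p) ℂ) := x.2
    have hy : (y : Matrix (Fin p) (Fin p) ℂ)ᴴ = -(y : Matrix (Fin p) (Fin p) ℂ) := y.2
    refine Prod.ext (Subtype.ext ?_) (Subtype.ext ?_) <;>
    · show (1/2 : ℝ) • _ = _
      simp only [bwd, LinearMap.coe_mk, AddHom.coe_mk, LinearMap.id_coe, id_eq]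
      rw [Matrix.conjTranspose_sub, Matrix.conjTranspose_smul, Complex.star_def,
        Complex.conj_I, hx, hy]
      match_scalars <;> simp [Complex.ext_iff] <;> ring
  · apply LinearMap.ext
    intro m
    show (1/2 : ℝ) • (m - mᴴ) - Complex.I • ((1/2 : ℝ) • (Complex.I • (m + mᴴ))) = m
    match_scalars <;> simp [Complex.ext_iff] <;> ring

lemma intertwine (s : Matrix (Fin p) (Fin p) ℂ) :
    (fwd p) ∘ₗ ((TcL s).restrictScalars ℝ) = ((Lmap s).prodMap (Lmap s)) ∘ₗ (fwd p) := by
  apply LinearMap.ext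
  intro m
  refine Prod.ext (Subtype.ext ?_) (Subtype.ext ?_) <;>
  · show (1/2 : ℝ) • _ = sᴴ * ((1/2 : ℝ) • _) * s
    simp only [TcL, LinearMap.coe_mk, AddHom.coe_mk, LinearMap.coe_restrictScalars]
    rw [Matrix.conjTranspose_mul, Matrix.conjTranspose_mul, Matrix.conjTranspose_conjTranspose]
    simp only [Matrix.mul_smul, Matrix.smul_mul, Matrix.mul_sub, Matrix.sub_mul,
      Matrix.mul_add, Matrix.add_mul, Matrix.mul_assoc]

lemma det_Lmap_sq (s : Matrix (Fin p) (Fin p) ℂ) :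
    LinearMap.det (Lmap s) * LinearMap.det (Lmap s) = Complex.normSq s.det ^ (2 * p) := by
  have hconj : ((e2 p : Matrix (Fin p) (Fin p) ℂ →ₗ[ℝ] SkewHerm p × SkewHerm p)
        ∘ₗ ((TcL s).restrictScalars ℝ)
        ∘ₗ ((e2 p).symm : SkewHerm p × SkewHerm p →ₗ[ℝ] Matrix (Fin p) (Fin p) ℂ))
      = (Lmap s).prodMap (Lmap s) := by
    apply LinearMap.ext
    intro x
    have he : ∀ y, (e2 p) y = (fwd p) y := fun _ => rfl
    simp only [LinearMap.comp_apply, LinearEquiv.coe_coe]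
    have h := LinearMap.congr_fun (intertwine s) ((e2 p).symm x)
    simp only [LinearMap.comp_apply] at h
    rw [he _, h]
    rw [show (fwd p) ((e2 p).symm x) = (e2 p) ((e2 p).symm x) from rfl,
      LinearEquiv.apply_symm_apply]
  have hc := LinearMap.det_conj ((TcL s).restrictScalars ℝ) (e2 p)
  rw [hconj, det_prodMap] at hc
  rw [hc, detRS' (Matrix.stdBasis ℂ (Fin p) (Fin p)).equivFun, det_TcL, _root_.map_mul, _root_.map_pow,
    _root_.map_pow, Complex.normSq_conj, ← pow_add, two_mul]

lemma abs_det_Lmap (s : Matrix (Fin p) (Fin p) ℂ) :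
    |LinearMap.det (Lmap s)| = ‖s.det‖ ^ (2 * p) := by
  have h3 : (LinearMap.det (Lmap s)) ^ 2 = (‖s.det‖ ^ (2 * p)) ^ 2 := by
    rw [sq, det_Lmap_sq, ← pow_mul, ← Complex.sq_norm, ← pow_mul, mul_comm (2 * p) 2]
  rw [← Real.sqrt_sq_eq_abs, h3, Real.sqrt_sq (by positivity)]

end HaarScalingAux

open HaarScalingAux

/-- Quasi-invariance of Lebesgue measure on `N*` under `m ↦ sᴴ m s`:
the measure of the image of `A` is `|det s|^{2p} · μ(A)`; in particular, for `s` lower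
triangular with positive real diagonal, the factor is `θ(s)^{2p}` with
`θ(s) = s₁₁ ⋯ s_pp`. -/
theorem haar_scaling_conjAct (p : ℕ) (hp : 1 ≤ p)
    (μ : Measure (SkewHerm p)) [μ.IsAddHaarMeasure]
    (s : Matrix (Fin p) (Fin p) ℂ) (hs : IsUnit s.det) :
    (∀ A : Set (SkewHerm p), MeasurableSet A →
      μ (conjAct s '' A) = ENNReal.ofReal (‖s.det‖ ^ (2 * p)) * μ A) ∧
    ((∀ i j : Fin p, i < j → s i j = 0) → (∀ i : Fin p, 0 < (s i i).re ∧ (s i i).im = 0) →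
      ∀ A : Set (SkewHerm p), MeasurableSet A →
        μ (conjAct s '' A) = ENNReal.ofReal ((∏ i, (s i i).re) ^ (2 * p)) * μ A) := by
  have key : ∀ A : Set (SkewHerm p),
      μ (conjAct s '' A) = ENNReal.ofReal (‖s.det‖ ^ (2 * p)) * μ A := by
    intro A
    rw [show conjAct s = ⇑(Lmap s) from rfl, μ.addHaar_image_linearMap (Lmap s) A,
      abs_det_Lmap]
  refine ⟨fun A _ => key A, fun htri hdiag A _ => ?_⟩
  have hd : ‖s.det‖ = ∏ i, (s i i).re := by
    have hdet : s.det = ∏ i, s i i := by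
      apply Matrix.det_of_lowerTriangular
      intro i j hij
      exact htri i j hij
    rw [hdet, norm_prod]
    refine Finset.prod_congr rfl fun i _ => ?_
    have : s i i = (((s i i).re : ℝ) : ℂ) := by
      rw [Complex.ext_iff]
      exact ⟨by simp, by simp [(hdiag i).2]⟩
    rw [this, Complex.norm_real, Real.norm_eq_abs, abs_of_pos (hdiag i).1]
    simp
  rw [key A, hd]


end
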